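/- Let p be a prime with p ≡ 2 mod 3, i.e., a prime of ℤ[ζ_6] that is inert in ℚ(ζ_6)/ℚ, and let χ be the sextic residue character modulo p on (ℤ[ζ_6]/p)^* given by χ(x) ≡ x^{(p²−1)/6} mod p (composed with a fixed embedding of sixth roots of unity into ℂ). Then the Gauss sum ∑_{x ∈ ℤ[ζ_6]/p, x≠0} χ(x) e(Tr-type additive character evaluated at x/p) equals p·χ(1−2ζ_6), which is p if p ≡ 3 mod 4 and −p if p ≡ 1 mod 4. -/

import Mathlib

open Finset

private lemma cube_eq_neg_one {R : Type*} [Field R] {x : R} (h : IsPrimitiveRoot x 6) :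
    x ^ 3 = -1 := by
  have h6 : x ^ 6 = 1 := h.pow_eq_one
  have h2 : (x ^ 3) * (x ^ 3) = 1 := by rw [← pow_add]; exact h6
  rcases mul_self_eq_one_iff.mp h2 with h' | h'
  · exact absurd h' (h.pow_ne_one_of_pos_of_lt (by norm_num) (by norm_num))
  · exact h'

/-- Sextic Gauss sum at an inert prime: for a prime `p ≡ 2 mod 3` (inert in `ℚ(ζ₆)`),
the residue field `ℤ[ζ₆]/p` is the finite field `F` with `p²` elements containing a
primitive sixth root of unity `ζ`. With `χ` the sextic residue character
(`χ(x) ≡ x^{(p²-1)/6}` via a fixed embedding `ζ ↦ ω = e^{2πi/6}`) and `ψ` the additive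
character obtained from the trace to `𝔽_p`, the Gauss sum
`∑_{x ≠ 0} χ(x) ψ(x)` equals `p·χ(1-2ζ₆)`, which is `p` if `p ≡ 3 mod 4` and `-p` if
`p ≡ 1 mod 4`. -/
theorem stmt_3 (p : ℕ) [hp : Fact p.Prime] (hinert : p % 3 = 2)
    (F : Type*) [Field F] [Fintype F] [DecidableEq F]
    (hcard : Fintype.card F = p ^ 2)
    [Algebra (ZMod p) F]
    (ζ : F) (hζ : IsPrimitiveRoot ζ 6)
    (ω : ℂ) (hω : ω = Complex.exp (2 * Real.pi * Complex.I / 6))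
    (χ : F → ℂ) (hχ0 : χ 0 = 0)
    (hχmul : ∀ x y : F, χ (x * y) = χ x * χ y)
    (hχ : ∀ x : F, x ≠ 0 → ∀ k : ℕ, x ^ ((p ^ 2 - 1) / 6) = ζ ^ k → χ x = ω ^ k)
    (ψ : F → ℂ)
    (hψ : ∀ x : F, ψ x = Complex.exp (2 * Real.pi * Complex.I *
        ((Algebra.trace (ZMod p) F x).val : ℂ) / p)) :
    (∑ x ∈ Finset.univ.erase (0 : F), χ x * ψ x) = p * χ (1 - 2 * ζ) ∧
    (p % 4 = 3 → (p : ℂ) * χ (1 - 2 * ζ) = p) ∧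
    (p % 4 = 1 → (p : ℂ) * χ (1 - 2 * ζ) = -p) := by
  have hp2 : p.Prime := hp.out
  haveI : NeZero p := ⟨hp2.ne_zero⟩
  have hAinj : Function.Injective (algebraMap (ZMod p) F) := (algebraMap (ZMod p) F).injective
  haveI : CharP F p := charP_of_injective_algebraMap hAinj p
  -- p is odd
  have h6dvd : (6 : ℕ) ∣ p ^ 2 - 1 := by
    have hζu : IsUnit ζ := hζ.isUnit (by norm_num)
    have hζu' : IsPrimitiveRoot hζu.unit 6 := hζ.isUnit_unit (by norm_num)
    have := orderOf_dvd_card (x := hζu.unit)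
    rw [← hζu'.eq_orderOf, Fintype.card_units, hcard] at this
    exact this
  have hpne2 : p ≠ 2 := by rintro rfl; norm_num at h6dvd
  have hpodd : p % 2 = 1 := Nat.odd_iff.mp (hp2.odd_of_ne_two hpne2)
  set k : ℕ := (p + 1) / 6 with hkdef
  have hk' : p + 1 = 6 * k := by omega
  have hfact : p ^ 2 - 1 = (p - 1) * (p + 1) := by
    obtain ⟨n, rfl⟩ : ∃ n, p = n + 1 := ⟨p - 1, by omega⟩
    have h1 : (n + 1) ^ 2 = n * (n + 2) + 1 := by ring
    have h2 : n + 1 - 1 = n := by omega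
    have h3 : n + 1 + 1 = n + 2 := by omega
    rw [h1, h2, h3, Nat.add_sub_cancel]
  have hexp : (p ^ 2 - 1) / 6 = (p - 1) * k := by
    rw [hfact, hk', show (p - 1) * (6 * k) = 6 * ((p - 1) * k) by ring,
      Nat.mul_div_cancel_left _ (by norm_num)]
  -- ω is a primitive 6th root of unity
  have hωprim : IsPrimitiveRoot ω 6 := by
    rw [hω]
    have := Complex.isPrimitiveRoot_exp 6 (by norm_num)
    norm_num at this ⊢
    exact this
  have hω3 : ω ^ 3 = -1 := cube_eq_neg_one hωprim
  -- facts about ζ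
  have hζ3 : ζ ^ 3 = -1 := cube_eq_neg_one hζ
  have hζ2 : ζ ^ 2 = ζ - 1 := by
    have hne : ζ + 1 ≠ 0 := by
      intro h
      have hz : ζ = -1 := by linear_combination h
      have : ζ ^ 2 = 1 := by rw [hz]; ring
      exact hζ.pow_ne_one_of_pos_of_lt (by norm_num) (by norm_num) this
    have hmul : (ζ + 1) * (ζ ^ 2 - ζ + 1) = 0 := by linear_combination hζ3
    have := (mul_eq_zero.mp hmul).resolve_left hne
    linear_combination this
  have hζ5 : ζ ^ 5 = 1 - ζ := by linear_combination ζ ^ 2 * hζ3 - hζ2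
  have hζp : ζ ^ p = ζ ^ 5 := by
    rw [pow_eq_pow_mod p hζ.pow_eq_one, show p % 6 = 5 by omega]
  -- the element s = 1 - 2ζ
  set s : F := 1 - 2 * ζ with hsdef
  have h2p : (2 : F) ^ p = 2 := by
    have h := add_pow_char (1 : F) 1 p
    rwa [one_pow, one_add_one_eq_two] at h
  have hsp : s ^ p = -s := by
    have h1 : s ^ p = 1 ^ p + (-(2 * ζ)) ^ p := by
      rw [show s = 1 + -(2 * ζ) by rw [hsdef]; ring]; exact add_pow_char _ _ p
    rw [one_pow, (hp2.odd_of_ne_two hpne2).neg_pow, mul_pow, h2p, hζp, hζ5] at h1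
    rw [h1, hsdef]; ring
  have hs0 : s ≠ 0 := by
    intro h
    have hsq : s ^ 2 = -3 := by rw [hsdef]; linear_combination 4 * hζ2
    rw [h] at hsq
    have h3 : (3 : F) = 0 := by linear_combination hsq
    have hdvd3 := (CharP.cast_eq_zero_iff F p 3).mp (by exact_mod_cast h3)
    have : p = 3 := (Nat.prime_dvd_prime_iff_eq hp2 (by norm_num)).mp hdvd3
    omega
  have hsp1 : s ^ (p - 1) = -1 := by
    have h1 : s ^ (p - 1) * s = (-1) * s := by
      rw [← pow_succ, show p - 1 + 1 = p by omega, hsp]; ring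
    exact mul_right_cancel₀ hs0 h1
  -- χ is trivial on the prime field
  have hχ_of_pow : ∀ x : F, x ≠ 0 → x ^ (p - 1) = 1 → χ x = 1 := by
    intro x hx h1
    have hpow : x ^ ((p ^ 2 - 1) / 6) = ζ ^ 0 := by
      rw [hexp, pow_mul, h1, one_pow, pow_zero]
    rw [hχ x hx 0 hpow, pow_zero]
  have hχalg : ∀ c : ZMod p, c ≠ 0 → χ (algebraMap (ZMod p) F c) = 1 := by
    intro c hc
    have hne : algebraMap (ZMod p) F c ≠ 0 := by
      intro h; exact hc (hAinj (by rw [h, map_zero]))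
    refine hχ_of_pow _ hne ?_
    rw [← map_pow, ZMod.pow_card_sub_one_eq_one hc, map_one]
  -- value of χ at s
  have hχs_even : k % 2 = 0 → χ s = 1 := by
    intro hke
    have hpow : s ^ ((p ^ 2 - 1) / 6) = ζ ^ 0 := by
      rw [hexp, pow_mul, hsp1, (Nat.even_iff.mpr hke).neg_one_pow, pow_zero]
    rw [hχ s hs0 0 hpow, pow_zero]
  have hχs_odd : k % 2 = 1 → χ s = -1 := by
    intro hko
    have hpow : s ^ ((p ^ 2 - 1) / 6) = ζ ^ 3 := by
      rw [hexp, pow_mul, hsp1, (Nat.odd_iff.mpr hko).neg_one_pow, hζ3]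
    rw [hχ s hs0 3 hpow, hω3]
  -- the trace formula via the Galois group
  have hfrank : Module.finrank (ZMod p) F = 2 := by
    have h := Module.card_eq_pow_finrank (K := ZMod p) (V := F)
    rw [hcard, ZMod.card] at h
    exact (Nat.pow_right_injective hp2.two_le h).symm
  have hfrobcomm : ∀ c : ZMod p,
      (algebraMap (ZMod p) F c) ^ p = algebraMap (ZMod p) F c := by
    intro c; rw [← map_pow, ZMod.pow_card]
  let φhom : F →ₐ[ZMod p] F :=
    { toFun := fun x => x ^ p
      map_one' := one_pow p
      map_mul' := fun x y => mul_pow x y p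
      map_zero' := zero_pow hp2.ne_zero
      map_add' := fun x y => add_pow_char x y p
      commutes' := hfrobcomm }
  have hφinj : Function.Injective φhom := by
    intro a b h
    have h2 : (a - b) ^ p = 0 := by
      rw [sub_pow_char]; simpa [φhom] using sub_eq_zero_of_eq h
    have := pow_eq_zero_iff (n := p) hp2.ne_zero |>.mp h2
    exact sub_eq_zero.mp this
  let φ : F ≃ₐ[ZMod p] F :=
    AlgEquiv.ofBijective φhom ((Finite.injective_iff_bijective).mp hφinj)
  have hφapp : ∀ x : F, φ x = x ^ p := fun x => rfl
  have hφne : (AlgEquiv.refl : F ≃ₐ[ZMod p] F) ≠ φ := by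
    intro h
    have hz : ζ = ζ ^ p := by
      have := congrArg (fun σ : F ≃ₐ[ZMod p] F => σ ζ) h
      simpa [hφapp] using this
    rw [hζp] at hz
    have hz5 : ζ ^ 5 = ζ ^ 1 := by rw [pow_one]; exact hz.symm
    have h51 : (5 : ℕ) = 1 := hζ.pow_inj (by norm_num) (by norm_num) hz5
    norm_num at h51
  have huniv : (Finset.univ : Finset (F ≃ₐ[ZMod p] F)) = {AlgEquiv.refl, φ} := by
    refine (Finset.eq_of_subset_of_card_le (Finset.subset_univ _) ?_).symm
    rw [Finset.card_univ, ← Nat.card_eq_fintype_card, IsGalois.card_aut_eq_finrank, hfrank, Finset.card_pair hφne]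
  have htr : ∀ x : F, algebraMap (ZMod p) F (Algebra.trace (ZMod p) F x) = x + x ^ p := by
    intro x
    rw [trace_eq_sum_automorphisms, huniv, Finset.sum_pair hφne]
    simp [hφapp]
  have hTs : Algebra.trace (ZMod p) F s = 0 := by
    apply hAinj
    rw [map_zero, htr s, hsp]; ring
  -- elements fixed by frobenius lie in the prime field
  have hfix : ∀ y : F, y ^ p = y → ∃ c : ZMod p, algebraMap (ZMod p) F c = y := by
    intro y hy
    classical
    set Rfix : Finset F := Finset.univ.filter (fun z : F => z ^ p = z) with hR
    set Aimg : Finset F := Finset.univ.image (algebraMap (ZMod p) F) with hA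
    have hsub : Aimg ⊆ Rfix := by
      intro z hz
      rw [hA, Finset.mem_image] at hz
      obtain ⟨c, _, rfl⟩ := hz
      rw [hR, Finset.mem_filter]
      exact ⟨Finset.mem_univ _, hfrobcomm c⟩
    have hcardA : Aimg.card = p := by
      rw [hA, Finset.card_image_of_injective _ hAinj, Finset.card_univ, ZMod.card]
    have hcardR : Rfix.card ≤ p := by
      set q : Polynomial F := Polynomial.X ^ p - Polynomial.X with hq
      have hqne : q ≠ 0 := by
        intro h
        have hc : q.coeff p = 1 := by
          rw [hq, Polynomial.coeff_sub, Polynomial.coeff_X_pow, if_pos rfl,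
            Polynomial.coeff_X, if_neg (by omega)]
          ring
        rw [h] at hc; simp at hc
      have hsubR : Rfix ⊆ q.roots.toFinset := by
        intro z hz
        rw [hR, Finset.mem_filter] at hz
        rw [Multiset.mem_toFinset, Polynomial.mem_roots hqne]
        simp [hq, Polynomial.IsRoot, sub_eq_zero, hz.2]
      calc Rfix.card ≤ q.roots.toFinset.card := Finset.card_le_card hsubR
        _ ≤ Multiset.card q.roots := Multiset.toFinset_card_le _
        _ ≤ q.natDegree := Polynomial.card_roots' q
        _ ≤ p := by
            rw [hq]
            refine le_trans (Polynomial.natDegree_sub_le _ _) ?_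
            simp only [Polynomial.natDegree_X_pow, Polynomial.natDegree_X]
            omega
    have heq : Aimg = Rfix := Finset.eq_of_subset_of_card_le hsub (by omega)
    have hy' : y ∈ Rfix := by rw [hR, Finset.mem_filter]; exact ⟨Finset.mem_univ _, hy⟩
    rw [← heq, hA, Finset.mem_image] at hy'
    obtain ⟨c, _, hc⟩ := hy'
    exact ⟨c, hc⟩
  -- ψ in terms of the standard additive character
  have hψe : ∀ x : F, ψ x = ZMod.stdAddChar (Algebra.trace (ZMod p) F x) := by
    intro x
    rw [hψ, ZMod.stdAddChar_apply, ZMod.toCircle_apply]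
  classical
  set E0 : Finset F := Finset.univ.erase 0 with hE0
  set EK : Finset (ZMod p) := Finset.univ.erase 0 with hEK
  have hcardEK : EK.card = p - 1 := by
    rw [hEK, Finset.card_erase_of_mem (Finset.mem_univ _), Finset.card_univ, ZMod.card]
  set G : ℂ := ∑ x ∈ E0, χ x * ψ x with hG
  -- step 1 : averaging over the prime field
  have halgne : ∀ c : ZMod p, c ≠ 0 → algebraMap (ZMod p) F c ≠ 0 := by
    intro c hc h; exact hc (hAinj (by rw [h, map_zero]))
  have step1 : ∀ c ∈ EK, (∑ x ∈ E0, χ x * ψ (algebraMap (ZMod p) F c * x)) = G := by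
    intro c hc
    rw [hEK, Finset.mem_erase] at hc
    have hcne := halgne c hc.1
    rw [hG]
    refine Finset.sum_nbij' (i := fun x => algebraMap (ZMod p) F c * x)
      (j := fun x => (algebraMap (ZMod p) F c)⁻¹ * x) ?_ ?_ ?_ ?_ ?_
    · intro a ha
      rw [hE0, Finset.mem_erase] at ha ⊢
      exact ⟨mul_ne_zero hcne ha.1, Finset.mem_univ _⟩
    · intro a ha
      rw [hE0, Finset.mem_erase] at ha ⊢
      exact ⟨mul_ne_zero (inv_ne_zero hcne) ha.1, Finset.mem_univ _⟩
    · intro a _; rw [← mul_assoc, inv_mul_cancel₀ hcne, one_mul]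
    · intro a _; rw [← mul_assoc, mul_inv_cancel₀ hcne, one_mul]
    · intro a _
      rw [hχmul, hχalg c hc.1, one_mul]
  -- inner sum
  have inner : ∀ x : F, ∑ c ∈ EK, ψ (algebraMap (ZMod p) F c * x) =
      (if Algebra.trace (ZMod p) F x = 0 then (p : ℂ) else 0) - 1 := by
    intro x
    have h1 : ∀ c : ZMod p, ψ (algebraMap (ZMod p) F c * x) =
        ZMod.stdAddChar (c * Algebra.trace (ZMod p) F x) := by
      intro c
      rw [hψe, ← Algebra.smul_def, map_smul, smul_eq_mul]
    rw [Finset.sum_congr rfl (fun c _ => h1 c), hEK,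
      Finset.sum_erase_eq_sub (Finset.mem_univ 0),
      AddChar.sum_mulShift _ (ZMod.isPrimitive_stdAddChar p), zero_mul,
      AddChar.map_zero_eq_one, ZMod.card]
    push_cast [apply_ite (Nat.cast : ℕ → ℂ)]
    ring
  -- sum of χ over nonzero elements is zero
  have hBzero : ∑ x ∈ E0, χ x = 0 := by
    obtain ⟨g, hg⟩ := IsCyclic.exists_generator (α := Fˣ)
    set N : ℕ := Fintype.card Fˣ with hNdef
    have hN : N = p ^ 2 - 1 := by rw [hNdef, Fintype.card_units, hcard]
    have h6N : 6 ∣ N := by rw [hN]; exact h6dvd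
    have hNpos : 0 < N := Fintype.card_pos
    have horder : orderOf g = N := by
      rw [hNdef, ← Nat.card_eq_fintype_card]
      exact orderOf_eq_card_of_forall_mem_zpowers hg
    have hb6 : ((g : F) ^ (N / 6)) ^ 6 = 1 := by
      rw [← pow_mul, Nat.div_mul_cancel h6N, ← Units.val_pow_eq_pow_val,
        pow_card_eq_one, Units.val_one]
    obtain ⟨i, hi6, hib⟩ := hζ.eq_pow_of_pow_eq_one hb6
    have hbne1 : (g : F) ^ (N / 6) ≠ 1 := by
      intro h
      have h' : g ^ (N / 6) = 1 := Units.ext (by simpa using h)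
      have := orderOf_dvd_of_pow_eq_one h'
      rw [horder] at this
      have hlt : N / 6 < N := Nat.div_lt_self hNpos (by norm_num)
      have hpos : 0 < N / 6 := Nat.div_pos (Nat.le_of_dvd hNpos h6N) (by norm_num)
      have := Nat.le_of_dvd hpos this
      omega
    have hine0 : i ≠ 0 := by
      intro h; rw [h, pow_zero] at hib; exact hbne1 hib.symm
    have hgne0 : (g : F) ≠ 0 := Units.ne_zero g
    have hχg : χ (g : F) = ω ^ i := by
      refine hχ _ hgne0 i ?_
      rw [← hN]
      exact hib.symm
    have hχgne1 : χ (g : F) ≠ 1 := by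
      rw [hχg]
      exact hωprim.pow_ne_one_of_pos_of_lt (by omega) hi6
    have hre : ∑ x ∈ E0, χ ((g : F) * x) = ∑ x ∈ E0, χ x := by
      refine Finset.sum_nbij' (i := fun x => (g : F) * x)
        (j := fun x => ((g : F))⁻¹ * x) ?_ ?_ ?_ ?_ ?_
      · intro a ha
        rw [hE0, Finset.mem_erase] at ha ⊢
        exact ⟨mul_ne_zero hgne0 ha.1, Finset.mem_univ _⟩
      · intro a ha
        rw [hE0, Finset.mem_erase] at ha ⊢
        exact ⟨mul_ne_zero (inv_ne_zero hgne0) ha.1, Finset.mem_univ _⟩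
      · intro a _; rw [← mul_assoc, inv_mul_cancel₀ hgne0, one_mul]
      · intro a _; rw [← mul_assoc, mul_inv_cancel₀ hgne0, one_mul]
      · intro a _; rfl
    have hre' : χ (g : F) * ∑ x ∈ E0, χ x = ∑ x ∈ E0, χ x := by
      rw [Finset.mul_sum, ← hre]
      exact Finset.sum_congr rfl (fun x _ => (hχmul _ _).symm)
    by_contra hne
    have := mul_right_cancel₀ hne (hre'.trans (one_mul _).symm)
    exact hχgne1 this
  -- the zero-trace nonzero elements
  set S0 : Finset F := E0.filter (fun x => Algebra.trace (ZMod p) F x = 0) with hS0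
  have hAsum : ∑ x ∈ S0, χ x = ((p - 1 : ℕ) : ℂ) * χ s := by
    have himg : S0 = EK.image (fun c => algebraMap (ZMod p) F c * s) := by
      ext x
      rw [hS0, Finset.mem_filter, hE0, Finset.mem_erase, Finset.mem_image]
      constructor
      · rintro ⟨⟨hx0, -⟩, hTx⟩
        have hxp : x ^ p = -x := by
          have h := htr x
          rw [hTx, map_zero] at h
          linear_combination -h
        have hyfix : (x * s⁻¹) ^ p = x * s⁻¹ := by
          rw [mul_pow, hxp, inv_pow, hsp, inv_neg]; ring
        obtain ⟨c, hc⟩ := hfix _ hyfix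
        have hcne : c ≠ 0 := by
          intro h
          rw [h, map_zero] at hc
          exact hx0 (by
            have := hc.symm
            rcases mul_eq_zero.mp this with h' | h'
            · exact h'
            · exact absurd h' (inv_ne_zero hs0))
        refine ⟨c, ?_, ?_⟩
        · rw [hEK, Finset.mem_erase]; exact ⟨hcne, Finset.mem_univ _⟩
        · rw [hc, mul_assoc, inv_mul_cancel₀ hs0, mul_one]
      · rintro ⟨c, hcEK, rfl⟩
        rw [hEK, Finset.mem_erase] at hcEK
        refine ⟨⟨mul_ne_zero (halgne c hcEK.1) hs0, Finset.mem_univ _⟩, ?_⟩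
        rw [← Algebra.smul_def, map_smul, hTs, smul_zero]
    rw [himg, Finset.sum_image (by
      intro a _ b _ h
      exact hAinj (mul_right_cancel₀ hs0 h))]
    rw [Finset.sum_congr rfl (fun c hc => by
      rw [hχmul, hχalg c (Finset.mem_erase.mp (by rwa [hEK] at hc)).1, one_mul]),
      Finset.sum_const, hcardEK, nsmul_eq_mul]
  -- main computation
  have hc0ne : ((p - 1 : ℕ) : ℂ) ≠ 0 := Nat.cast_ne_zero.mpr (by omega)
  have key : ((p - 1 : ℕ) : ℂ) * G = ((p - 1 : ℕ) : ℂ) * ((p : ℂ) * χ s) := by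
    calc ((p - 1 : ℕ) : ℂ) * G = ∑ _c ∈ EK, G := by
          rw [Finset.sum_const, hcardEK, nsmul_eq_mul]
      _ = ∑ c ∈ EK, ∑ x ∈ E0, χ x * ψ (algebraMap (ZMod p) F c * x) :=
          Finset.sum_congr rfl (fun c hc => (step1 c hc).symm)
      _ = ∑ x ∈ E0, ∑ c ∈ EK, χ x * ψ (algebraMap (ZMod p) F c * x) := Finset.sum_comm
      _ = ∑ x ∈ E0, χ x * ((if Algebra.trace (ZMod p) F x = 0 then (p : ℂ) else 0) - 1) := by
          refine Finset.sum_congr rfl (fun x _ => ?_)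
          rw [← Finset.mul_sum, inner x]
      _ = (∑ x ∈ E0, χ x * (if Algebra.trace (ZMod p) F x = 0 then (p : ℂ) else 0))
            - ∑ x ∈ E0, χ x := by
          rw [← Finset.sum_sub_distrib]
          exact Finset.sum_congr rfl (fun x _ => by ring)
      _ = (p : ℂ) * ∑ x ∈ S0, χ x - 0 := by
          rw [hBzero]
          congr 1
          have hterm : ∀ x ∈ E0, χ x * (if Algebra.trace (ZMod p) F x = 0 then (p : ℂ) else 0)
              = (if Algebra.trace (ZMod p) F x = 0 then χ x else 0) * (p : ℂ) := by
            intro x _; split <;> ring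
          rw [Finset.sum_congr rfl hterm, ← Finset.sum_mul, hS0, Finset.sum_filter, mul_comm]
      _ = ((p - 1 : ℕ) : ℂ) * ((p : ℂ) * χ s) := by
          rw [hAsum]; ring
  have hGauss : G = (p : ℂ) * χ s := mul_left_cancel₀ hc0ne key
  refine ⟨hGauss, ?_, ?_⟩
  · intro hp4
    have hke : k % 2 = 0 := by omega
    rw [hχs_even hke, mul_one]
  · intro hp4
    have hko : k % 2 = 1 := by omega
    rw [hχs_odd hko, mul_neg_one]
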